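/- arXiv:1510.08878 — 4 statements merged into one kernel-verified Lean document; each statement's English description precedes it below -/
import Mathlib

section
/- Let X be a real locally convex topological vector space, T : X → X a continuous linear operator, and x ∈ X. Then the convex hull of the orbit Orb(x,T) = {Tⁿx : n ≥ 0} is dense in X if and only if for every nonzero continuous linear functional f on X, the set {f(Tⁿx) : n ≥ 0} is not bounded above (i.e., sup_n f(Tⁿx) = ∞). -/
theorem hahnBanach_characterization_convexCyclicity
    {X : Type*} [AddCommGroup X] [Module ℝ X] [TopologicalSpace X]
    [IsTopologicalAddGroup X] [ContinuousSMul ℝ X] [LocallyConvexSpace ℝ X] [T2Space X]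
    (T : X →L[ℝ] X) (x : X) :
    Dense (convexHull ℝ (Set.range fun n : ℕ => (T ^ n) x)) ↔
      ∀ f : X →L[ℝ] ℝ, f ≠ 0 → ¬ BddAbove (Set.range fun n : ℕ => f ((T ^ n) x)) := by
  constructor
  · intro hd f hf hb
    obtain ⟨M, hM⟩ := hb
    have hsub : convexHull ℝ (Set.range fun n : ℕ => (T ^ n) x) ⊆ {y | f y ≤ M} := by
      apply convexHull_min
      · rintro _ ⟨n, rfl⟩
        exact hM ⟨n, rfl⟩
      · exact convex_halfSpace_le ⟨fun a b => f.map_add a b, fun c a => f.map_smul c a⟩ M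
    have hclosed : IsClosed {y : X | f y ≤ M} := isClosed_le f.continuous continuous_const
    have hall : ∀ y, f y ≤ M := fun y =>
      (closure_minimal hsub hclosed) (hd.closure_eq ▸ Set.mem_univ y : y ∈ closure _)
    have hle0 : ∀ y, f y ≤ 0 := by
      intro y
      by_contra hpos
      push_neg at hpos
      have h1 := hall (((M + 1) / f y) • y)
      rw [f.map_smul, smul_eq_mul, div_mul_cancel₀ _ (ne_of_gt hpos)] at h1
      linarith
    apply hf
    ext y
    have h1 := hle0 y
    have h2 := hle0 (-y)
    simp only [map_neg] at h2
    simp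
    linarith
  · intro h
    by_contra hd
    obtain ⟨y, hy⟩ : ∃ y, y ∉ closure (convexHull ℝ (Set.range fun n : ℕ => (T ^ n) x)) := by
      by_contra h'
      push_neg at h'
      exact hd h'
    obtain ⟨f, u, hfu, huy⟩ := geometric_hahn_banach_closed_point
      ((convex_convexHull ℝ _).closure) isClosed_closure hy
    have hxmem : x ∈ convexHull ℝ (Set.range fun n : ℕ => (T ^ n) x) :=
      subset_convexHull ℝ _ ⟨0, by simp⟩
    have hf0 : f ≠ 0 := by
      intro h0
      have h1 := hfu x (subset_closure hxmem)
      rw [h0] at h1 huy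
      simp at h1 huy
      linarith
    refine h f hf0 ⟨u, ?_⟩
    rintro _ ⟨n, rfl⟩
    exact le_of_lt (hfu _ (subset_closure (subset_convexHull ℝ _ ⟨n, rfl⟩)))
end

section
/- If a < -1, then every point x₀ ∈ [a,-1] is a peak point for the convex-polynomials on [a,-1]; that is, for every x₀ ∈ [a,-1] there exists a convex-polynomial p such that |p(x₀)| > |p(x)| for all x ∈ [a,-1] with x ≠ x₀. -/
open Polynomial Set

lemma mul_coeff_nn {p q : Polynomial ℝ} (hp : ∀ n, 0 ≤ p.coeff n)
    (hq : ∀ n, 0 ≤ q.coeff n) : ∀ n, 0 ≤ (p * q).coeff n := by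
  intro n
  rw [Polynomial.coeff_mul]
  exact Finset.sum_nonneg fun x _ => mul_nonneg (hp _) (hq _)

lemma pow_coeff_nn {p : Polynomial ℝ} (hp : ∀ n, 0 ≤ p.coeff n) (m : ℕ) :
    ∀ n, 0 ≤ (p ^ m).coeff n := by
  induction m with
  | zero => intro n; simp [Polynomial.coeff_one]; split_ifs <;> norm_num
  | succ k ih => rw [pow_succ]; exact mul_coeff_nn ih hp

lemma fmono (t : ℝ) (m : ℕ) (hm : 1 ≤ m) (y₀ : ℝ) (hy₀ : 0 < y₀)
    (ht : t = (m + 1) * y₀) (b : ℝ) (hb : b < t) :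
    ∀ y ∈ Icc (1:ℝ) b, y ≠ y₀ → y * (t - y)^m < y₀ * (t - y₀)^m := by
  set f : ℝ → ℝ := fun y => y * (t - y)^m with hf
  have hderiv : ∀ y : ℝ, HasDerivAt f ((t - y)^(m-1) * (t - (m+1)*y)) y := by
    intro y
    have h1 : HasDerivAt (fun y : ℝ => t - y) (-1) y := by
      simpa using (hasDerivAt_id y).const_sub t
    have h2 : HasDerivAt (fun y : ℝ => (t - y)^m) ((m:ℝ) * (t - y)^(m-1) * (-1)) y :=
      h1.pow m
    have h3 : HasDerivAt f (1 * (t - y)^m + y * ((m:ℝ) * (t - y)^(m-1) * (-1))) y :=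
      (hasDerivAt_id y).mul h2
    convert h3 using 1
    have hm1 : (t - y)^m = (t - y)^(m-1) * (t - y) := by
      conv_lhs => rw [show m = (m-1) + 1 from (Nat.succ_pred_eq_of_pos hm).symm]
      rw [pow_succ]
    rw [hm1]; push_cast; ring
  have hcont : Continuous f := by fun_prop
  have hmono : StrictMonoOn f (Icc 0 y₀) := by
    apply strictMonoOn_of_deriv_pos (convex_Icc _ _) hcont.continuousOn
    intro y hy
    rw [interior_Icc] at hy
    rw [(hderiv y).deriv]
    have hty : 0 < t - y := by
      have : y₀ ≤ t := by rw [ht]; nlinarith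
      linarith [hy.2]
    have h2 : 0 < t - (m+1)*y := by
      rw [ht]
      have : (1:ℝ) ≤ m + 1 := by have := Nat.cast_nonneg (α := ℝ) m; linarith
      nlinarith [hy.2]
    exact mul_pos (pow_pos hty _) h2
  have hanti : StrictAntiOn f (Icc y₀ b) := by
    apply strictAntiOn_of_deriv_neg (convex_Icc _ _) hcont.continuousOn
    intro y hy
    rw [interior_Icc] at hy
    rw [(hderiv y).deriv]
    have hty : 0 < t - y := by linarith [hy.2]
    have h2 : t - (m+1)*y < 0 := by
      rw [ht]
      have h1m : (0:ℝ) < m + 1 := by positivity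
      nlinarith [hy.1]
    have hp : 0 < (t - y)^(m-1) := by positivity
    nlinarith
  intro y hy hne
  rcases lt_or_gt_of_ne hne with h | h
  · exact hmono ⟨by linarith [hy.1], le_of_lt h⟩ ⟨le_of_lt hy₀, le_refl _⟩ h
  · exact hanti ⟨le_refl _, by linarith [hy.2, le_of_lt h]⟩ ⟨le_of_lt h, hy.2⟩ h

/-- A convex-polynomial: all coefficients nonnegative and they sum to 1
(equivalently, `p.eval 1 = 1`). -/
def IsConvexPolynomial (p : Polynomial ℝ) : Prop :=
  (∀ n : ℕ, 0 ≤ p.coeff n) ∧ p.eval 1 = 1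

theorem peak_points_of_convexPolynomials (a : ℝ) (ha : a < -1) :
    ∀ x₀ ∈ Set.Icc a (-1 : ℝ), ∃ p : Polynomial ℝ, IsConvexPolynomial p ∧
      ∀ x ∈ Set.Icc a (-1 : ℝ), x ≠ x₀ → |p.eval x| < |p.eval x₀| := by
  intro x₀ hx₀
  set b : ℝ := -a with hbdef
  have hb1 : 1 < b := by simp [hbdef]; linarith
  set y₀ : ℝ := -x₀ with hy₀def
  have hy₀1 : 1 ≤ y₀ := by have := hx₀.2; simp [hy₀def]; linarith
  have hy₀b : y₀ ≤ b := by have := hx₀.1; simp [hy₀def, hbdef]; linarith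
  obtain ⟨m, hm⟩ := exists_nat_gt b
  have hm1 : 1 ≤ m := by
    by_contra h
    push_neg at h
    interval_cases m
    · simp at hm; linarith
  set t : ℝ := (m + 1) * y₀ with htdef
  have hbt : b < t := by
    have : (m:ℝ) < t := by
      rw [htdef]; nlinarith [hy₀1, Nat.cast_nonneg (α := ℝ) m]
    linarith
  have ht0 : 0 < t := by linarith
  set c : ℝ := ((1 + t)^m)⁻¹ with hcdef
  have hc0 : 0 < c := by rw [hcdef]; positivity
  refine ⟨Polynomial.C c * (Polynomial.X * (Polynomial.X + Polynomial.C t)^m), ⟨?_, ?_⟩, ?_⟩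
  · -- coefficients nonneg
    intro n
    rw [Polynomial.coeff_C_mul]
    apply mul_nonneg hc0.le
    apply mul_coeff_nn _ _ n
    · intro k; rw [Polynomial.coeff_X]; split_ifs <;> norm_num
    · apply pow_coeff_nn
      intro k
      rw [Polynomial.coeff_add, Polynomial.coeff_X, Polynomial.coeff_C]
      split_ifs <;> simp_all <;> linarith
  · -- eval at 1
    simp [hcdef]
    rw [inv_mul_cancel₀]
    positivity
  · -- peak
    intro x hx hne
    have hx0 : x < 0 := by have := hx.2; linarith
    have hxt : 0 < x + t := by have := hx.1; simp [hbdef] at hbt ⊢; linarith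
    have hx₀t : 0 < x₀ + t := by
      have := hx₀.1; simp [hbdef] at hbt; linarith
    have heval : ∀ z : ℝ, (Polynomial.C c * (Polynomial.X * (Polynomial.X + Polynomial.C t)^m)).eval z
        = c * (z * (z + t)^m) := by intro z; simp
    rw [heval, heval]
    have habs : ∀ z : ℝ, z < 0 → 0 < z + t → |c * (z * (z + t)^m)| = c * ((-z) * (t - (-z))^m) := by
      intro z hz hzt
      rw [abs_of_nonpos]
      · ring_nf
      · apply mul_nonpos_of_nonneg_of_nonpos hc0.le
        apply mul_nonpos_of_nonpos_of_nonneg hz.le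
        positivity
    have hx₀0 : x₀ < 0 := by have := hx₀.2; linarith
    rw [habs x hx0 hxt, habs x₀ hx₀0 hx₀t]
    have key := fmono t m hm1 y₀ (by linarith) htdef b hbt (-x)
      ⟨by linarith [hx.2], by simp [hbdef]; linarith [hx.1]⟩
      (by simp [hy₀def]; exact fun h => hne (by linarith))
    have : -x₀ = y₀ := by rw [hy₀def]
    rw [this]
    exact mul_lt_mul_of_pos_left key hc0
end

section
/- Let a < b be real numbers. The convex-polynomials are uniformly dense in C([a,b], ℝ) (i.e., for every continuous f : [a,b] → ℝ and every ε > 0 there is a convex-polynomial p with sup_{x ∈ [a,b]} |p(x) - f(x)| < ε) if and only if b < -1. -/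
set_option maxHeartbeats 1000000
open Polynomial Nat Filter

private lemma hasSum_expR (y : ℝ) : HasSum (fun n : ℕ => y^n / (n ! : ℝ)) (Real.exp y) := by
  rw [Real.exp_eq_exp_ℝ]
  exact NormedSpace.expSeries_div_hasSum_exp y

private lemma tail_bound (Y y : ℝ) (h : |y| ≤ Y) (M : ℕ) :
    |Real.exp y - ∑ i ∈ Finset.range M, y^i / (i ! : ℝ)| ≤
      Real.exp Y - ∑ i ∈ Finset.range M, Y^i / (i ! : ℝ) := by
  have hy := hasSum_expR y
  have hY := hasSum_expR Y
  have hys := hy.summable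
  have hYs := hY.summable
  have e1 : (∑ i ∈ Finset.range M, y ^ i / (i ! : ℝ)) + (∑' i : ℕ, y^(i+M)/((i+M)! : ℝ))
      = Real.exp y := by
    have := Summable.sum_add_tsum_nat_add (f := fun n : ℕ => y^n / (n ! : ℝ)) M hys
    rw [hy.tsum_eq] at this; exact this
  have e2 : (∑ i ∈ Finset.range M, Y ^ i / (i ! : ℝ)) + (∑' i : ℕ, Y^(i+M)/((i+M)! : ℝ))
      = Real.exp Y := by
    have := Summable.sum_add_tsum_nat_add (f := fun n : ℕ => Y^n / (n ! : ℝ)) M hYs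
    rw [hY.tsum_eq] at this; exact this
  have hYa : Summable (fun i : ℕ => Y^(i+M)/((i+M)! : ℝ)) :=
    (summable_nat_add_iff (f := fun n : ℕ => Y^n / (n ! : ℝ)) M).2 hYs
  have habs0 : Summable (fun i : ℕ => |y|^(i+M)/((i+M)! : ℝ)) :=
    (summable_nat_add_iff (f := fun n : ℕ => |y|^n / (n ! : ℝ)) M).2 (hasSum_expR |y|).summable
  have habs : Summable (fun i : ℕ => |y^(i+M)/((i+M)! : ℝ)|) := by
    refine habs0.congr fun i => ?_
    rw [abs_div, abs_pow, abs_of_nonneg (by positivity : (0:ℝ) ≤ ((i+M)! : ℝ))]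
  have key : |∑' i : ℕ, y^(i+M)/((i+M)! : ℝ)| ≤ ∑' i : ℕ, Y^(i+M)/((i+M)! : ℝ) := by
    calc |∑' i : ℕ, y^(i+M)/((i+M)! : ℝ)| ≤ ∑' i : ℕ, |y|^(i+M)/((i+M)! : ℝ) := by
          have := norm_tsum_le_tsum_norm (f := fun i : ℕ => y^(i+M)/((i+M)! : ℝ))
            (by simpa [Real.norm_eq_abs, abs_div, abs_pow, Nat.abs_cast] using habs0)
          simpa [Real.norm_eq_abs, abs_div, abs_pow, Nat.abs_cast] using this
      _ ≤ ∑' i : ℕ, Y^(i+M)/((i+M)! : ℝ) := by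
          refine Summable.tsum_le_tsum (fun i => ?_) habs0 hYa
          have : |y|^(i+M) ≤ Y^(i+M) := pow_le_pow_left₀ (abs_nonneg y) h _
          have hf : (0:ℝ) < ((i+M)! : ℝ) := by positivity
          gcongr
  have r1 : Real.exp y - ∑ i ∈ Finset.range M, y ^ i / (i ! : ℝ)
      = ∑' i : ℕ, y^(i+M)/((i+M)! : ℝ) := by linarith
  have r2 : Real.exp Y - ∑ i ∈ Finset.range M, Y ^ i / (i ! : ℝ)
      = ∑' i : ℕ, Y^(i+M)/((i+M)! : ℝ) := by linarith
  rw [r1, r2]; exact key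

private lemma approx_neg_const {a b : ℝ} (hab : a < b) (hb : b < -1) {c : ℝ} (hc : c < 0)
    {ε : ℝ} (hε : 0 < ε) :
    ∃ p : Polynomial ℝ, IsConvexPolynomial p ∧ ∀ x ∈ Set.Icc a b, |p.eval x - c| < ε := by
  have ha1 : (1:ℝ) < -a := by linarith
  have hb0 : b < 0 := by linarith
  set κ := -c with hκdef
  have hκ0 : 0 < κ := by simp [hκdef]; linarith
  set l := Real.log (1 + κ⁻¹) with hldef
  have h1κ : 0 < κ⁻¹ := inv_pos.2 hκ0
  have hl0 : 0 < l := Real.log_pos (by linarith)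
  have hel : Real.exp l = 1 + κ⁻¹ := Real.exp_log (by linarith)
  -- choice of m
  have hb1 : 1 < -b := by linarith
  set L := Real.log (ε * l / 4) with hLdef
  obtain ⟨m0, hm0⟩ := pow_unbounded_of_one_lt (max 1 (-L / l)) hb1
  set m := 2 * m0 + 1 with hmdef
  have hmodd : Odd m := ⟨m0, by ring⟩
  have hbm : (-b) ^ m0 ≤ (-b) ^ m :=
    pow_le_pow_right₀ (le_of_lt hb1) (by omega)
  have hnegpow : b ^ m = -((-b) ^ m) := by
    have := hmodd.neg_pow b
    linarith
  have hbmL : l * b ^ m ≤ L := by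
    have h1 : -L / l ≤ (-b) ^ m := le_trans (le_trans (le_max_right _ _) hm0.le) hbm
    have h2 : -L ≤ l * (-b) ^ m := by
      rw [div_le_iff₀ hl0] at h1; linarith
    rw [hnegpow]; linarith
  have hexpbm : Real.exp (l * b ^ m) ≤ ε * l / 4 := by
    calc Real.exp (l * b ^ m) ≤ Real.exp L := Real.exp_le_exp.2 hbmL
      _ = ε * l / 4 := Real.exp_log (by positivity)
  -- choice of N
  set Y := l * (-a) ^ m with hYdef
  have hlY : l ≤ Y := by
    have : (1:ℝ) ≤ (-a) ^ m := one_le_pow₀ ha1.le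
    nlinarith
  have hY0 : 0 < Y := lt_of_lt_of_le hl0 hlY
  set R : ℕ → ℝ := fun N => Real.exp Y - ∑ i ∈ Finset.range (N+1), Y^i / (i ! : ℝ) with hRdef
  have hR0 : ∀ N, 0 ≤ R N := by
    intro N
    have := tail_bound Y Y (by rw [abs_of_pos hY0]) (N+1)
    exact le_trans (abs_nonneg _) this
  have hRtend : Filter.Tendsto R Filter.atTop (nhds 0) := by
    have h1 : Filter.Tendsto (fun n => ∑ i ∈ Finset.range n, Y^i / (i ! : ℝ))
        Filter.atTop (nhds (Real.exp Y)) := (hasSum_expR Y).tendsto_sum_nat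
    have h2 : Filter.Tendsto (fun N : ℕ => ∑ i ∈ Finset.range (N+1), Y^i / (i ! : ℝ))
        Filter.atTop (nhds (Real.exp Y)) := h1.comp (Filter.tendsto_add_atTop_nat 1)
    have := Filter.Tendsto.sub (tendsto_const_nhds (x := Real.exp Y)) h2
    simpa using this
  have hε2 : 0 < ε * l / (2 * (1 + κ)) := by positivity
  have hev : ∀ᶠ N in Filter.atTop, R N < ε * l / (2 * (1 + κ)) := by
    exact hRtend.eventually (eventually_lt_nhds hε2)
  obtain ⟨N, hN1, hNR⟩ : ∃ N : ℕ, 1 ≤ N ∧ R N < ε * l / (2 * (1 + κ)) := by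
    obtain ⟨N, h1, h2⟩ := (Filter.eventually_ge_atTop 1).and hev |>.exists
    exact ⟨N, h1, h2⟩
  -- the polynomial
  set D := ∑ j ∈ Finset.range N, l^(j+1)/((j+1)! : ℝ) with hDdef
  have hlD : l ≤ D := by
    have h0 : (0:ℕ) ∈ Finset.range N := Finset.mem_range.2 (by omega)
    have := Finset.single_le_sum (f := fun j : ℕ => l^(j+1)/((j+1)! : ℝ))
      (fun i _ => by positivity) h0
    simpa using this
  have hD0 : 0 < D := lt_of_lt_of_le hl0 hlD
  set P := ∑ j ∈ Finset.range N, (Polynomial.C (l^(j+1)/((j+1)! : ℝ)) * Polynomial.X^(m*(j+1)) :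
    Polynomial ℝ) with hPdef
  have hwj : ∀ j : ℕ, 0 ≤ l^(j+1)/((j+1)! : ℝ) := fun j =>
    div_nonneg (pow_nonneg hl0.le _) (Nat.cast_nonneg _)
  refine ⟨Polynomial.C D⁻¹ * P, ⟨?_, ?_⟩, ?_⟩
  · intro n
    rw [Polynomial.coeff_C_mul, hPdef, Polynomial.finset_sum_coeff]
    refine mul_nonneg (inv_nonneg.2 hD0.le) (Finset.sum_nonneg fun j _ => ?_)
    rw [Polynomial.coeff_C_mul, Polynomial.coeff_X_pow]
    by_cases hn : n = m * (j+1)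
    · rw [if_pos hn, mul_one]; exact hwj j
    · rw [if_neg hn, mul_zero]
  · rw [Polynomial.eval_mul, Polynomial.eval_C, hPdef, Polynomial.eval_finset_sum]
    have : ∑ j ∈ Finset.range N, ((Polynomial.C (l^(j+1)/((j+1)! : ℝ)) *
        Polynomial.X^(m*(j+1)) : Polynomial ℝ)).eval 1 = D := by
      rw [hDdef]
      refine Finset.sum_congr rfl fun j _ => ?_
      simp
    rw [this, inv_mul_cancel₀ (ne_of_gt hD0)]
  · intro x hx
    obtain ⟨hax, hxb⟩ := Set.mem_Icc.1 hx
    set y := l * x ^ m with hydef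
    have hxabs : |x| ≤ -a := by
      rw [abs_le]; constructor <;> linarith
    have hyY : |y| ≤ Y := by
      rw [hydef, hYdef, abs_mul, abs_of_pos hl0, abs_pow]
      have : |x|^m ≤ (-a)^m := pow_le_pow_left₀ (abs_nonneg x) hxabs m
      nlinarith
    have hylb : y ≤ l * b ^ m := by
      have : x ^ m ≤ b ^ m := (hmodd.strictMono_pow (R := ℝ)).monotone hxb
      nlinarith
    have hexpy : Real.exp y ≤ ε * l / 4 :=
      le_trans (Real.exp_le_exp.2 hylb) hexpbm
    -- eval formula
    have hevalx : (Polynomial.C D⁻¹ * P).eval x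
        = D⁻¹ * ∑ j ∈ Finset.range N, y^(j+1)/((j+1)! : ℝ) := by
      rw [Polynomial.eval_mul, Polynomial.eval_C, hPdef, Polynomial.eval_finset_sum]
      congr 1
      refine Finset.sum_congr rfl fun j _ => ?_
      rw [Polynomial.eval_mul, Polynomial.eval_C, Polynomial.eval_pow, Polynomial.eval_X,
        hydef, pow_mul, mul_pow]
      ring
    -- partial sums
    have hsum_shift : ∀ z : ℝ, ∑ i ∈ Finset.range (N+1), z^i/(i ! : ℝ)
        = (∑ j ∈ Finset.range N, z^(j+1)/((j+1)! : ℝ)) + 1 := by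
      intro z
      rw [Finset.sum_range_succ' (fun i => z^i/(i ! : ℝ)) N]
      simp
    have tail1 : |Real.exp y - ∑ i ∈ Finset.range (N+1), y^i/(i ! : ℝ)| ≤ R N :=
      tail_bound Y y hyY (N+1)
    have tail2 : |Real.exp l - ∑ i ∈ Finset.range (N+1), l^i/(i ! : ℝ)| ≤ R N :=
      tail_bound Y l (by rwa [abs_of_pos hl0]) (N+1)
    -- final computation
    set Sy := ∑ i ∈ Finset.range (N+1), y^i/(i ! : ℝ) with hSydef
    set Sl := ∑ i ∈ Finset.range (N+1), l^i/(i ! : ℝ) with hSldef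
    have hTy : ∑ j ∈ Finset.range N, y^(j+1)/((j+1)! : ℝ) = Sy - 1 := by
      rw [hSydef, hsum_shift y]; ring
    have hTl : D = Sl - 1 := by
      rw [hDdef, hSldef]
      have := hsum_shift l
      linarith
    have hSyb : |Sy| ≤ ε * l / 4 + R N := by
      have h1 : |Sy| ≤ |Real.exp y| + |Real.exp y - Sy| := by
        have := abs_sub_abs_le_abs_sub Sy (Real.exp y)  -- not quite
        have h := abs_add_le (Real.exp y) (Sy - Real.exp y)
        simp only [add_sub_cancel] at h
        calc |Sy| = |Real.exp y + (Sy - Real.exp y)| := by ring_nf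
          _ ≤ |Real.exp y| + |Sy - Real.exp y| := abs_add_le _ _
          _ = |Real.exp y| + |Real.exp y - Sy| := by rw [abs_sub_comm]
      have h2 : |Real.exp y| = Real.exp y := abs_of_pos (Real.exp_pos y)
      calc |Sy| ≤ |Real.exp y| + |Real.exp y - Sy| := h1
        _ ≤ ε * l / 4 + R N := by rw [h2]; exact add_le_add hexpy tail1
    have hκD : κ * D = 1 + κ * (Sl - Real.exp l) := by
      rw [hTl]
      have : κ * (Real.exp l - 1) = 1 := by
        rw [hel]; field_simp; ring
      nlinarith [this]
    have hcκ : c = -κ := by rw [hκdef]; ring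
    have hmain : (Polynomial.C D⁻¹ * P).eval x - c = D⁻¹ * (Sy + κ * (Sl - Real.exp l)) := by
      rw [hevalx, hTy, hcκ]
      have hκel : κ * (Real.exp l - 1) = 1 := by
        rw [hel]; field_simp; ring
      have hD' : D ≠ 0 := ne_of_gt hD0
      field_simp
      nlinarith [hκD]
    rw [hmain]
    have hRN : R N < ε * l / (2 * (1 + κ)) := hNR
    have hRN0 : 0 ≤ R N := hR0 N
    have htail2' : |Sl - Real.exp l| ≤ R N := by rw [abs_sub_comm]; exact tail2
    -- abstract arithmetic from here on
    clear_value R Sy Sl D P y Y L m κ l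
    set q := Sy + κ * (Sl - Real.exp l) with hqdef
    have hbound : |q| ≤ ε * l / 4 + R N + κ * R N := by
      calc |q| ≤ |Sy| + κ * |Sl - Real.exp l| := by
            have h := abs_add_le Sy (κ * (Sl - Real.exp l))
            rw [abs_mul, abs_of_pos hκ0] at h
            exact h
        _ ≤ (ε * l / 4 + R N) + κ * R N :=
            add_le_add hSyb (mul_le_mul_of_nonneg_left htail2' hκ0.le)
        _ = ε * l / 4 + R N + κ * R N := by ring
    have habsmul : |D⁻¹ * q| = D⁻¹ * |q| := by
      rw [abs_mul, abs_of_pos (inv_pos.2 hD0)]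
    rw [habsmul]
    have hDinv : D⁻¹ ≤ l⁻¹ := inv_anti₀ hl0 hlD
    have hstep : ε * l / 4 + R N + κ * R N < ε * l * 3 / 4 := by
      have h2 : (1 + κ) * R N < (1 + κ) * (ε * l / (2 * (1 + κ))) :=
        mul_lt_mul_of_pos_left hRN (by linarith)
      have hκne : (1:ℝ) + κ ≠ 0 := by linarith
      have h3 : (1 + κ) * (ε * l / (2 * (1 + κ))) = ε * l / 2 := by
        field_simp
      linarith [h2, h3]
    have hl0' : (0:ℝ) < l⁻¹ := inv_pos.2 hl0
    calc D⁻¹ * |q| ≤ l⁻¹ * |q| := mul_le_mul_of_nonneg_right hDinv (abs_nonneg _)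
      _ ≤ l⁻¹ * (ε * l / 4 + R N + κ * R N) := mul_le_mul_of_nonneg_left hbound hl0'.le
      _ < l⁻¹ * (ε * l * 3 / 4) := mul_lt_mul_of_pos_left hstep hl0'
      _ = ε * 3 / 4 * (l⁻¹ * l) := by ring
      _ = ε * 3 / 4 := by rw [inv_mul_cancel₀ (ne_of_gt hl0), mul_one]
      _ < ε := by linarith

private lemma convex_mul {p q : Polynomial ℝ} (hp : IsConvexPolynomial p)
    (hq : IsConvexPolynomial q) : IsConvexPolynomial (p * q) := by
  constructor
  · intro n
    rw [Polynomial.coeff_mul]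
    exact Finset.sum_nonneg fun ij _ => mul_nonneg (hp.1 _) (hq.1 _)
  · rw [Polynomial.eval_mul, hp.2, hq.2, one_mul]

private lemma approx_const {a b : ℝ} (hab : a < b) (hb : b < -1) (c : ℝ) {ε : ℝ} (hε : 0 < ε) :
    ∃ p : Polynomial ℝ, IsConvexPolynomial p ∧ ∀ x ∈ Set.Icc a b, |p.eval x - c| < ε := by
  rcases lt_trichotomy c 0 with hc | hc | hc
  · exact approx_neg_const hab hb hc hε
  · obtain ⟨p, hp, hest⟩ := approx_neg_const hab hb (c := -(ε/2))
      (by linarith) (ε := ε/2) (by linarith)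
    refine ⟨p, hp, fun x hx => ?_⟩
    have h1 := hest x hx
    rw [hc]
    rw [abs_lt] at h1 ⊢
    constructor <;> [skip; skip] <;> · obtain ⟨u, v⟩ := h1; linarith
  · obtain ⟨p1, hp1, he1⟩ := approx_neg_const hab hb (c := (-1:ℝ)) (by norm_num)
      (ε := min 1 (ε/(2*c))) (lt_min one_pos (by positivity))
    obtain ⟨p2, hp2, he2⟩ := approx_neg_const hab hb (c := -c) (by linarith)
      (ε := ε/4) (by linarith)
    refine ⟨p1 * p2, convex_mul hp1 hp2, fun x hx => ?_⟩
    have h1 := he1 x hx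
    have h2 := he2 x hx
    have hp1b : |p1.eval x| ≤ 2 := by
      have h1' : |p1.eval x - (-1)| < 1 := lt_of_lt_of_le h1 (min_le_left _ _)
      rw [abs_lt] at h1'
      rw [abs_le]
      constructor <;> · obtain ⟨u, v⟩ := h1'; linarith
    have hmin2 : |p1.eval x - (-1)| < ε/(2*c) := lt_of_lt_of_le h1 (min_le_right _ _)
    have key : (p1*p2).eval x - c
        = p1.eval x * (p2.eval x - (-c)) + (-c) * (p1.eval x - (-1)) := by
      rw [Polynomial.eval_mul]; ring
    rw [key]
    have hcne : c ≠ 0 := ne_of_gt hc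
    calc |p1.eval x * (p2.eval x - -c) + -c * (p1.eval x - -1)|
        ≤ |p1.eval x * (p2.eval x - -c)| + |(-c) * (p1.eval x - -1)| := abs_add_le _ _
      _ = |p1.eval x| * |p2.eval x - -c| + c * |p1.eval x - -1| := by
          rw [abs_mul, abs_mul, abs_neg, abs_of_pos hc]
      _ < 2 * (ε/4) + c * (ε/(2*c)) := by
          have t1 : |p1.eval x| * |p2.eval x - -c| ≤ 2 * |p2.eval x - -c| :=
            mul_le_mul_of_nonneg_right hp1b (abs_nonneg _)
          have t2 : 2 * |p2.eval x - -c| < 2 * (ε/4) := by linarith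
          have t3 : c * |p1.eval x - -1| < c * (ε/(2*c)) :=
            mul_lt_mul_of_pos_left hmin2 hc
          linarith
      _ = ε := by field_simp; ring

private lemma approx_monomial {a b : ℝ} (hab : a < b) (hb : b < -1) (c : ℝ) (k : ℕ)
    {ε : ℝ} (hε : 0 < ε) :
    ∃ p : Polynomial ℝ, IsConvexPolynomial p ∧
      ∀ x ∈ Set.Icc a b, |p.eval x - c * x ^ k| < ε := by
  have ha0 : (0:ℝ) < -a := by linarith
  have hak : (0:ℝ) < (-a)^k := pow_pos ha0 k
  obtain ⟨p, hp, hest⟩ := approx_const hab hb c (ε := ε / ((-a)^k + 1)) (by positivity)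
  have hXk : IsConvexPolynomial (Polynomial.X ^ k : Polynomial ℝ) := by
    constructor
    · intro n
      rw [Polynomial.coeff_X_pow]
      split_ifs <;> norm_num
    · rw [Polynomial.eval_pow, Polynomial.eval_X, one_pow]
  refine ⟨p * Polynomial.X ^ k, convex_mul hp hXk, fun x hx => ?_⟩
  obtain ⟨hax, hxb⟩ := Set.mem_Icc.1 hx
  have hxabs : |x| ≤ -a := by rw [abs_le]; constructor <;> linarith
  have hkey : (p * Polynomial.X ^ k).eval x - c * x ^ k = (p.eval x - c) * x ^ k := by
    rw [Polynomial.eval_mul, Polynomial.eval_pow, Polynomial.eval_X]; ring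
  rw [hkey, abs_mul, abs_pow]
  have h1 : |p.eval x - c| < ε / ((-a)^k + 1) := hest x hx
  have h2 : |x|^k ≤ (-a)^k := pow_le_pow_left₀ (abs_nonneg x) hxabs k
  calc |p.eval x - c| * |x| ^ k ≤ |p.eval x - c| * (-a)^k :=
        mul_le_mul_of_nonneg_left h2 (abs_nonneg _)
    _ < (ε / ((-a)^k + 1)) * (-a)^k := mul_lt_mul_of_pos_right h1 hak
    _ < ε := by
        rw [div_mul_eq_mul_div, div_lt_iff₀ (by positivity)]
        nlinarith

private lemma approx_add {a b : ℝ} (hab : a < b) (hb : b < -1) {f g : ℝ → ℝ}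
    (hf : ∀ ε : ℝ, 0 < ε → ∃ p : Polynomial ℝ, IsConvexPolynomial p ∧
      ∀ x ∈ Set.Icc a b, |p.eval x - f x| < ε)
    (hg : ∀ ε : ℝ, 0 < ε → ∃ p : Polynomial ℝ, IsConvexPolynomial p ∧
      ∀ x ∈ Set.Icc a b, |p.eval x - g x| < ε)
    (hfb : ∃ Bf : ℝ, ∀ x ∈ Set.Icc a b, |f x| ≤ Bf)
    (hgb : ∃ Bg : ℝ, ∀ x ∈ Set.Icc a b, |g x| ≤ Bg) :
    ∀ ε : ℝ, 0 < ε → ∃ p : Polynomial ℝ, IsConvexPolynomial p ∧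
      ∀ x ∈ Set.Icc a b, |p.eval x - (f x + g x)| < ε := by
  intro ε hε
  obtain ⟨Bf, hBf⟩ := hfb
  obtain ⟨Bg, hBg⟩ := hgb
  set B := max 0 (max Bf Bg) with hBdef
  have hB0 : 0 ≤ B := le_max_left _ _
  have hBf' : ∀ x ∈ Set.Icc a b, |f x| ≤ B := fun x hx =>
    le_trans (hBf x hx) (le_trans (le_max_left _ _) (le_max_right _ _))
  have hBg' : ∀ x ∈ Set.Icc a b, |g x| ≤ B := fun x hx =>
    le_trans (hBg x hx) (le_trans (le_max_right _ _) (le_max_right _ _))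
  obtain ⟨p, hp, hpe⟩ := hf (min 1 (ε/4)) (lt_min one_pos (by linarith))
  obtain ⟨q, hq, hqe⟩ := hg (min 1 (ε/4)) (lt_min one_pos (by linarith))
  obtain ⟨r, hr, hre⟩ := approx_const hab hb 2 (ε := ε/(4*(B+1))) (by positivity)
  have hhalf : IsConvexPolynomial (Polynomial.C (1/2 : ℝ) * (p + q)) := by
    constructor
    · intro n
      rw [Polynomial.coeff_C_mul, Polynomial.coeff_add]
      have := hp.1 n
      have := hq.1 n
      positivity
    · rw [Polynomial.eval_mul, Polynomial.eval_C, Polynomial.eval_add, hp.2, hq.2]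
      norm_num
  refine ⟨(Polynomial.C (1/2 : ℝ) * (p + q)) * r, convex_mul hhalf hr, fun x hx => ?_⟩
  have hpe' := hpe x hx
  have hqe' := hqe x hx
  have hre' := hre x hx
  have hp1 : |p.eval x - f x| < 1 := lt_of_lt_of_le hpe' (min_le_left _ _)
  have hp4 : |p.eval x - f x| < ε/4 := lt_of_lt_of_le hpe' (min_le_right _ _)
  have hq1 : |q.eval x - g x| < 1 := lt_of_lt_of_le hqe' (min_le_left _ _)
  have hq4 : |q.eval x - g x| < ε/4 := lt_of_lt_of_le hqe' (min_le_right _ _)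
  set u := p.eval x with hu
  set v := q.eval x with hv
  set w := r.eval x with hw
  have heval : ((Polynomial.C (1/2 : ℝ) * (p + q)) * r).eval x = (1/2) * (u + v) * w := by
    rw [Polynomial.eval_mul, Polynomial.eval_mul, Polynomial.eval_C, Polynomial.eval_add]
  rw [heval]
  have hub : |u| ≤ B + 1 := by
    have h1 := hBf' x hx
    rw [abs_lt] at hp1
    rw [abs_le] at h1 ⊢
    constructor <;> · obtain ⟨s1, s2⟩ := hp1; obtain ⟨s3, s4⟩ := h1; linarith
  have hvb : |v| ≤ B + 1 := by
    have h1 := hBg' x hx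
    rw [abs_lt] at hq1
    rw [abs_le] at h1 ⊢
    constructor <;> · obtain ⟨s1, s2⟩ := hq1; obtain ⟨s3, s4⟩ := h1; linarith
  have hkey : (1/2) * (u + v) * w - (f x + g x)
      = (1/2) * (u + v) * (w - 2) + ((u - f x) + (v - g x)) := by ring
  rw [hkey]
  have habs1 : |(1/2) * (u + v) * (w - 2)| ≤ (B + 1) * |w - 2| := by
    rw [abs_mul]
    have : |(1/2) * (u + v)| ≤ B + 1 := by
      rw [abs_mul]
      have habsuv : |u + v| ≤ 2 * (B + 1) := le_trans (abs_add_le u v) (by linarith)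
      rw [abs_of_pos (by norm_num : (0:ℝ) < 1/2)]
      linarith
    exact mul_le_mul_of_nonneg_right this (abs_nonneg _)
  have habs2 : (B + 1) * |w - 2| < (B + 1) * (ε/(4*(B+1))) :=
    mul_lt_mul_of_pos_left hre' (by linarith)
  have habs3 : (B + 1) * (ε/(4*(B+1))) = ε/4 := by
    field_simp
  calc |(1/2) * (u + v) * (w - 2) + ((u - f x) + (v - g x))|
      ≤ |(1/2) * (u + v) * (w - 2)| + |(u - f x) + (v - g x)| := abs_add_le _ _
    _ ≤ |(1/2) * (u + v) * (w - 2)| + (|u - f x| + |v - g x|) := by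
        have := abs_add_le (u - f x) (v - g x); linarith
    _ < ε/4 + (ε/4 + ε/4) := by
        have := lt_of_le_of_lt habs1 (lt_of_lt_of_le habs2 (le_of_eq habs3))
        linarith
    _ < ε := by linarith

private lemma approx_poly {a b : ℝ} (hab : a < b) (hb : b < -1) (Q : Polynomial ℝ) :
    ∀ ε : ℝ, 0 < ε → ∃ p : Polynomial ℝ, IsConvexPolynomial p ∧
      ∀ x ∈ Set.Icc a b, |p.eval x - Q.eval x| < ε := by
  induction Q using Polynomial.induction_on' with
  | add u v hu hv =>
    have hbnd : ∀ w : Polynomial ℝ, ∃ Bw : ℝ, ∀ x ∈ Set.Icc a b, |w.eval x| ≤ Bw := by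
      intro w
      obtain ⟨C, hC⟩ := (isCompact_Icc (a := a) (b := b)).exists_bound_of_continuousOn
        (w.continuousOn)
      exact ⟨C, fun x hx => by simpa using hC x hx⟩
    have := approx_add hab hb hu hv (hbnd u) (hbnd v)
    intro ε hε
    obtain ⟨p, hp, hpe⟩ := this ε hε
    exact ⟨p, hp, fun x hx => by simpa [Polynomial.eval_add] using hpe x hx⟩
  | monomial n c =>
    intro ε hε
    obtain ⟨p, hp, hpe⟩ := approx_monomial hab hb c n hε
    exact ⟨p, hp, fun x hx => by simpa [Polynomial.eval_monomial] using hpe x hx⟩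

theorem convex_stone_weierstrass (a b : ℝ) (hab : a < b) :
    (∀ f : ℝ → ℝ, ContinuousOn f (Set.Icc a b) → ∀ ε : ℝ, 0 < ε →
      ∃ p : Polynomial ℝ, IsConvexPolynomial p ∧ ∀ x ∈ Set.Icc a b, |p.eval x - f x| < ε)
    ↔ b < -1 := by
  constructor
  · intro h
    by_contra hb
    push_neg at hb
    obtain ⟨p, ⟨hcoeff, heval1⟩, hest⟩ := h (fun _ => -2) continuousOn_const 1 one_pos
    have hbmem : b ∈ Set.Icc a b := Set.mem_Icc.2 ⟨hab.le, le_refl b⟩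
    have h2 := hest b hbmem
    have hlt : p.eval b < -1 := by
      rw [abs_lt] at h2
      obtain ⟨u, v⟩ := h2
      linarith
    have hge : -1 ≤ p.eval b := by
      rcases le_or_gt 0 b with hb0 | hb0
      · have : 0 ≤ p.eval b := by
          rw [Polynomial.eval_eq_sum_range]
          exact Finset.sum_nonneg fun i _ => mul_nonneg (hcoeff i) (pow_nonneg hb0 i)
        linarith
      · have hble : |b| ≤ 1 := by rw [abs_of_neg hb0]; linarith
        have h3 : |p.eval b| ≤ p.eval 1 := by
          rw [Polynomial.eval_eq_sum_range, Polynomial.eval_eq_sum_range]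
          calc |∑ i ∈ Finset.range (p.natDegree + 1), p.coeff i * b ^ i|
              ≤ ∑ i ∈ Finset.range (p.natDegree + 1), |p.coeff i * b ^ i| :=
                Finset.abs_sum_le_sum_abs _ _
            _ ≤ ∑ i ∈ Finset.range (p.natDegree + 1), p.coeff i * 1 ^ i := by
                refine Finset.sum_le_sum fun i _ => ?_
                rw [abs_mul, abs_of_nonneg (hcoeff i), abs_pow, one_pow]
                exact mul_le_mul_of_nonneg_left
                  (pow_le_one₀ (abs_nonneg b) hble) (hcoeff i)
        rw [heval1] at h3
        rw [abs_le] at h3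
        linarith [h3.1]
    linarith
  · intro hb f hf ε hε
    obtain ⟨Q, hQ⟩ := exists_polynomial_near_of_continuousOn a b f hf (ε/2) (by linarith)
    obtain ⟨p, hp, hpe⟩ := approx_poly hab hb Q (ε/2) (by linarith)
    refine ⟨p, hp, fun x hx => ?_⟩
    have h1 := hQ x hx
    have h2 := hpe x hx
    calc |p.eval x - f x| = |(p.eval x - Q.eval x) + (Q.eval x - f x)| := by ring_nf
      _ ≤ |p.eval x - Q.eval x| + |Q.eval x - f x| := abs_add_le _ _
      _ < ε/2 + ε/2 := add_lt_add h2 h1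
      _ = ε := by ring
end

section
/- Let a < b < -1 and let k be a positive integer. Then the convex hull of the set of functions {x ↦ x^{kn} : n ≥ 0} is uniformly dense in C([a,b], ℝ) if and only if k is odd. -/
open Polynomial Set

namespace CPDense

/-- Predicate: all coefficients of a real polynomial are nonnegative. -/
def NN (p : ℝ[X]) : Prop := ∀ n, 0 ≤ p.coeff n

lemma NN.add {p q : ℝ[X]} (hp : NN p) (hq : NN q) : NN (p + q) := fun n => by
  rw [coeff_add]; exact add_nonneg (hp n) (hq n)

lemma NN.mul {p q : ℝ[X]} (hp : NN p) (hq : NN q) : NN (p * q) := fun n => by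
  rw [coeff_mul]; exact Finset.sum_nonneg fun i _ => mul_nonneg (hp _) (hq _)

lemma NN.one : NN (1 : ℝ[X]) := fun n => by
  rw [coeff_one]; split <;> norm_num

lemma NN.pow {p : ℝ[X]} (hp : NN p) (m : ℕ) : NN (p ^ m) := by
  induction m with
  | zero => simpa using NN.one
  | succ S ih => rw [pow_succ]; exact ih.mul hp

lemma NN.C {r : ℝ} (hr : 0 ≤ r) : NN (Polynomial.C r) := fun n => by
  rw [coeff_C]; split <;> simp [hr]

lemma NN.X : NN (Polynomial.X : ℝ[X]) := fun n => by
  rw [coeff_X]; split <;> norm_num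

lemma NN.sum {s : Finset ℕ} {F : ℕ → ℝ[X]} (h : ∀ i ∈ s, NN (F i)) :
    NN (∑ i ∈ s, F i) := fun n => by
  rw [Polynomial.finset_sum_coeff]
  exact Finset.sum_nonneg fun i hi => h i hi n

/-- Bernoulli-flavored bound. -/
lemma pow_one_sub_le {s : ℝ} (h0 : 0 ≤ s) (h1 : s ≤ 1) (N : ℕ) :
    (1 - s) ^ N ≤ 1 / (1 + N * s) := by
  have hpos : (0:ℝ) < 1 + N * s := by positivity
  have hb : 1 + (N:ℝ) * s ≤ (1 + s) ^ N := one_add_mul_le_pow (by linarith) N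
  have h2 : (1 - s) ^ N * (1 + s) ^ N = (1 - s ^ 2) ^ N := by
    rw [← mul_pow]; ring_nf
  have h3 : (1 - s ^ 2 : ℝ) ^ N ≤ 1 := by
    apply pow_le_one₀ <;> nlinarith
  rw [le_div_iff₀ hpos]
  calc (1 - s) ^ N * (1 + N * s) ≤ (1 - s) ^ N * (1 + s) ^ N := by
        apply mul_le_mul_of_nonneg_left hb (pow_nonneg (by linarith) N)
    _ ≤ 1 := by rw [h2]; exact h3

lemma pow_one_add_le {x : ℝ} (h0 : 0 ≤ x) {N : ℕ} (h : (N:ℝ) * x ≤ 3 / 10) (hx2 : x ≤ 1) :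
    (1 + x) ^ N ≤ 3 / 2 := by
  have hb : 1 + (N:ℝ) * (-x) ≤ (1 + -x) ^ N := one_add_mul_le_pow (by linarith) N
  have hd : (0:ℝ) < 1 - N * x := by linarith
  have h2 : (1 + x) ^ N * (1 - x) ^ N = (1 - x ^ 2) ^ N := by rw [← mul_pow]; ring_nf
  have h3 : (1 - x ^ 2 : ℝ) ^ N ≤ 1 := by apply pow_le_one₀ <;> nlinarith
  have h4 : (1 + x) ^ N * (1 - N * x) ≤ 1 := by
    calc (1 + x) ^ N * (1 - N * x) ≤ (1 + x) ^ N * (1 - x) ^ N := by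
          apply mul_le_mul_of_nonneg_left _ (by positivity)
          rw [mul_neg, ← sub_eq_add_neg, ← sub_eq_add_neg] at hb; exact hb
      _ ≤ 1 := by rw [h2]; exact h3
  have h5 : (1 + x) ^ N ≤ 1 / (1 - N * x) := by
    rw [le_div_iff₀ hd]; exact h4
  calc (1 + x) ^ N ≤ 1 / (1 - N * x) := h5
    _ ≤ 1 / (7/10) := by
        apply one_div_le_one_div_of_le (by norm_num) (by linarith)
    _ ≤ 3 / 2 := by norm_num

lemma abs_pow_sub_pow (u v : ℝ) (hu : |u| ≤ 1) (hv : |v| ≤ 1) (m : ℕ) :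
    |u ^ m - v ^ m| ≤ m * |u - v| := by
  induction m with
  | zero => simp
  | succ S ih =>
    have key : u ^ (S+1) - v ^ (S+1) = u ^ S * (u - v) + (u ^ S - v ^ S) * v := by ring
    have h1 : |u ^ S| ≤ 1 := by rw [abs_pow]; exact pow_le_one₀ (abs_nonneg u) hu
    calc |u ^ (S+1) - v ^ (S+1)| ≤ |u ^ S * (u - v)| + |(u ^ S - v ^ S) * v| := by
          rw [key]; exact abs_add_le _ _
      _ ≤ 1 * |u - v| + (S * |u - v|) * 1 := by
          rw [abs_mul, abs_mul]
          exact add_le_add (mul_le_mul_of_nonneg_right h1 (abs_nonneg _))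
            (mul_le_mul ih hv (abs_nonneg _) (by positivity))
      _ = (S + 1 : ℕ) * |u - v| := by push_cast; ring

/-- The gadget: a nonneg-coefficient polynomial uniformly close to `-1` on `[-γ, -β]`
with coefficient sum at most `1/2`. -/
lemma gadgetW (γ β : ℝ) (hβ : 1 < β) (hβγ : β ≤ γ) (η : ℝ) (hη : 0 < η) :
    ∃ W : ℝ[X], NN W ∧ 0 ≤ W.eval 1 ∧ W.eval 1 ≤ 1/2 ∧
      ∀ y ∈ Icc (-γ) (-β), -1 ≤ W.eval y ∧ W.eval y ≤ -1 + η := by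
  have hγ : 1 < γ := lt_of_lt_of_le hβ hβγ
  obtain ⟨K₁, hK₁⟩ := pow_unbounded_of_one_lt (4/η) hβ
  obtain ⟨K₂, hK₂⟩ := pow_unbounded_of_one_lt (20:ℝ) hγ
  set K : ℕ := 2*(K₁+K₂)+1 with hKdef
  have hKodd : Odd K := ⟨K₁+K₂, by omega⟩
  have hK0 : K ≠ 0 := by omega
  have hβK : 4/η ≤ β ^ K :=
    hK₁.le.trans (pow_le_pow_right₀ hβ.le (by omega))
  have hγK : (20:ℝ) ≤ γ ^ K :=
    hK₂.le.trans (pow_le_pow_right₀ hγ.le (by omega))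
  set R : ℝ := γ ^ K with hRdef
  have hRpos : 0 < R := by positivity
  have hR20 : (20:ℝ) ≤ R := hγK
  set N : ℕ := ⌈R/4⌉₊ with hNdef
  have hN4 : R/4 ≤ (N:ℝ) := Nat.le_ceil _
  have hNle : (N:ℝ) ≤ R/4 + 1 := (Nat.ceil_lt_add_one (by positivity)).le
  have hNR : (N:ℝ) * R⁻¹ ≤ 3/10 := by
    have h1 : (N:ℝ) * R⁻¹ ≤ (R/4 + 1) * R⁻¹ :=
      mul_le_mul_of_nonneg_right hNle (by positivity)
    have h2 : (R/4 + 1) * R⁻¹ = 1/4 + R⁻¹ := by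
      field_simp
    have h3 : R⁻¹ ≤ 1/20 := by
      rw [inv_le_comm₀ hRpos (by norm_num)]; linarith
    linarith
  set H : ℝ[X] := 1 + Polynomial.C R⁻¹ * Polynomial.X ^ K with hHdef
  have hHNN : NN H := NN.add NN.one (NN.mul (NN.C (by positivity)) (NN.X.pow K))
  refine ⟨H ^ N - 1, ?_, ?_, ?_, ?_⟩
  · -- NN
    intro n
    have hco : (H ^ N - 1).coeff n = (H ^ N).coeff n - (1:ℝ[X]).coeff n := by
      rw [coeff_sub]
    match n with
    | 0 =>
      have h0 : (H ^ N).coeff 0 = 1 := by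
        rw [coeff_zero_eq_eval_zero, eval_pow]
        have : H.eval 0 = 1 := by
          simp [hHdef, zero_pow hK0]
        rw [this, one_pow]
      rw [hco, h0, coeff_one]
      norm_num
    | (n+1) =>
      rw [hco, coeff_one]
      simp only [Nat.add_eq_zero, and_false, if_false]
      simpa using (hHNN.pow N) (n+1)
  · -- eval 1 ≥ 0
    have : (1:ℝ) ≤ (1 + R⁻¹) ^ N := one_le_pow₀ (by nlinarith [inv_nonneg.mpr hRpos.le])
    have he : (H ^ N - 1).eval 1 = (1 + R⁻¹) ^ N - 1 := by
      simp [hHdef]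
    rw [he]; linarith
  · -- eval 1 ≤ 1/2
    have he : (H ^ N - 1).eval 1 = (1 + R⁻¹) ^ N - 1 := by
      simp [hHdef]
    have h1 : (1 + R⁻¹) ^ N ≤ 3/2 := by
      apply pow_one_add_le (by positivity) hNR
      rw [inv_le_one_iff₀]; right; linarith
    rw [he]; linarith
  · -- eval on interval
    intro y hy
    obtain ⟨hy1, hy2⟩ := hy
    have hyK1 : (-γ) ^ K ≤ y ^ K := (Odd.strictMono_pow hKodd).monotone hy1
    have hyK2 : y ^ K ≤ (-β) ^ K := (Odd.strictMono_pow hKodd).monotone hy2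
    rw [Odd.neg_pow hKodd] at hyK1 hyK2
    set z : ℝ := 1 + R⁻¹ * y ^ K with hzdef
    have he : (H ^ N - 1).eval y = z ^ N - 1 := by
      simp [hHdef, hzdef]
    have hz0 : 0 ≤ z := by
      have : R⁻¹ * -R ≤ R⁻¹ * y ^ K :=
        mul_le_mul_of_nonneg_left hyK1 (by positivity)
      have h2 : R⁻¹ * -R = -1 := by field_simp
      rw [hzdef]; linarith [h2 ▸ this]
    set s : ℝ := R⁻¹ * β ^ K with hsdef
    have hspos : 0 < s := by positivity
    have hs1 : s ≤ 1 := by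
      rw [hsdef]
      have hbK : β ^ K ≤ R := pow_le_pow_left₀ (by linarith) hβγ K
      calc R⁻¹ * β ^ K ≤ R⁻¹ * R := mul_le_mul_of_nonneg_left hbK (by positivity)
        _ = 1 := by field_simp
    have hzs : z ≤ 1 - s := by
      rw [hzdef, hsdef]
      have : R⁻¹ * y ^ K ≤ R⁻¹ * -β ^ K :=
        mul_le_mul_of_nonneg_left hyK2 (by positivity)
      have h2 : R⁻¹ * -β ^ K = -(R⁻¹ * β ^ K) := by ring
      linarith [h2 ▸ this]
    have hzN : z ^ N ≤ 4 / β ^ K := by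
      calc z ^ N ≤ (1 - s) ^ N := pow_le_pow_left₀ hz0 hzs N
        _ ≤ 1 / (1 + N * s) := pow_one_sub_le hspos.le hs1 N
        _ ≤ 4 / β ^ K := by
            have hNs : β ^ K / 4 ≤ (N:ℝ) * s := by
              have : R/4 * s ≤ (N:ℝ) * s := mul_le_mul_of_nonneg_right hN4 hspos.le
              have h2 : R/4 * s = β ^ K / 4 := by
                rw [hsdef]; field_simp
              linarith [h2 ▸ this]
            have hβKpos : (0:ℝ) < β ^ K := by positivity
            rw [div_le_div_iff₀ (by linarith) hβKpos]
            nlinarith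
    have hη4 : 4 / β ^ K ≤ η := by
      rw [div_le_iff₀ (by positivity)]
      have h4η : 0 < 4/η := by positivity
      calc (4:ℝ) = η * (4/η) := by field_simp
        _ ≤ η * β ^ K := mul_le_mul_of_nonneg_left hβK hη.le
    constructor
    · rw [he]; have : 0 ≤ z ^ N := pow_nonneg hz0 N; linarith
    · rw [he]; linarith

set_option maxHeartbeats 2000000 in
/-- Main approximation lemma in the substituted variable:
any polynomial can be approximated on `[-γ, -β] ⊆ (-∞, -1)` by a
nonneg-coefficient polynomial with coefficient sum exactly 1. -/
lemma main_y (γ β : ℝ) (hβ : 1 < β) (hβγ : β ≤ γ) (q : ℝ[X]) (ε : ℝ) (hε : 0 < ε) :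
    ∃ P : ℝ[X], NN P ∧ P.eval 1 = 1 ∧
      ∀ y ∈ Icc (-γ) (-β), |P.eval y - q.eval y| < ε := by
  have hγ : 1 < γ := lt_of_lt_of_le hβ hβγ
  set D : ℕ := q.natDegree with hD
  set A : ℕ → ℝ := fun i => |q.coeff i| with hA
  set B : ℝ := ∑ i ∈ Finset.range (D+1), A i * γ ^ i with hB
  have hA0 : ∀ i, 0 ≤ A i := fun i => abs_nonneg _
  have hB0 : 0 ≤ B := Finset.sum_nonneg fun i _ => by positivity
  have hAB : ∑ i ∈ Finset.range (D+1), A i ≤ B := by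
    apply Finset.sum_le_sum
    intro i _
    nlinarith [one_le_pow₀ (le_of_lt hγ) (n := i), hA0 i]
  set ε' : ℝ := ε/3 with hε'
  have hε'0 : 0 < ε' := by positivity
  obtain ⟨M₀, hM₀⟩ := exists_pow_lt_of_lt_one (x := 1/(B+1)) (by positivity)
    (by norm_num : (1:ℝ)/2 < 1)
  set M : ℕ := 2 * M₀ with hM
  have hMeven : (-1:ℝ) ^ M = 1 := by
    rw [hM, pow_mul]; norm_num
  have hhalfM : (1/2:ℝ) ^ M ≤ 1/(B+1) := by
    calc (1/2:ℝ) ^ M ≤ (1/2) ^ M₀ :=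
          pow_le_pow_of_le_one (by norm_num) (by norm_num) (by omega)
      _ ≤ 1/(B+1) := hM₀.le
  set η : ℝ := min 1 (ε' / ((B+1)*(M+1))) with hηdef
  have hη0 : 0 < η := by
    apply lt_min one_pos
    positivity
  have hη1 : η ≤ 1 := min_le_left _ _
  obtain ⟨W, hWNN, hW1a, hW1b, hWy⟩ := gadgetW γ β hβ hβγ η hη0
  set m : ℕ → ℕ := fun i => if 0 ≤ q.coeff i then M else M+1 with hm
  have hmM : ∀ i, M ≤ m i := fun i => by
    simp only [hm]; split <;> omega
  have hmM1 : ∀ i, m i ≤ M + 1 := fun i => by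
    simp only [hm]; split <;> omega
  have hsign : ∀ i, q.coeff i = A i * (-1:ℝ) ^ (m i) := by
    intro i
    rw [hm, hA]
    rcases le_or_gt 0 (q.coeff i) with h | h
    · simp [h, hMeven, abs_of_nonneg h]
    · simp only [not_le.mpr h, if_false]
      rw [pow_succ, hMeven, abs_of_neg h]
      ring
  set P₀ : ℝ[X] := ∑ i ∈ Finset.range (D+1),
    Polynomial.C (A i) * Polynomial.X ^ i * W ^ (m i) with hP₀
  have hP₀NN : NN P₀ := NN.sum fun i _ =>
    ((NN.C (hA0 i)).mul (NN.X.pow i)).mul (hWNN.pow (m i))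
  have hP₀eval : ∀ y : ℝ, P₀.eval y =
      ∑ i ∈ Finset.range (D+1), A i * y ^ i * (W.eval y) ^ (m i) := by
    intro y
    rw [hP₀, Polynomial.eval_finset_sum]
    congr 1; funext i
    simp
  set mP : ℝ := P₀.eval 1 with hmP
  have hmP0 : 0 ≤ mP := by
    rw [hmP, hP₀eval]
    apply Finset.sum_nonneg
    intro i _
    exact mul_nonneg (mul_nonneg (hA0 i) (by positivity)) (pow_nonneg hW1a (m i))
  have hmP1 : mP ≤ 1 := by
    rw [hmP, hP₀eval]
    have hterm : ∀ i ∈ Finset.range (D+1),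
        A i * (1:ℝ) ^ i * (W.eval 1) ^ (m i) ≤ A i * (1/2) ^ M := by
      intro i _
      rw [one_pow, mul_one]
      have h1 : (W.eval 1) ^ (m i) ≤ (1/2:ℝ) ^ (m i) := pow_le_pow_left₀ hW1a hW1b _
      have h2 : (1/2:ℝ) ^ (m i) ≤ (1/2:ℝ) ^ M :=
        pow_le_pow_of_le_one (by norm_num) (by norm_num) (hmM i)
      exact mul_le_mul_of_nonneg_left (h1.trans h2) (hA0 i)
    calc ∑ i ∈ Finset.range (D+1), A i * (1:ℝ) ^ i * (W.eval 1) ^ (m i)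
        ≤ ∑ i ∈ Finset.range (D+1), A i * (1/2) ^ M := Finset.sum_le_sum hterm
      _ = (1/2) ^ M * ∑ i ∈ Finset.range (D+1), A i := by
          rw [Finset.mul_sum]; congr 1; funext i; ring
      _ ≤ (1/(B+1)) * B := by
          apply mul_le_mul hhalfM hAB (Finset.sum_nonneg fun i _ => hA0 i) (by positivity)
      _ ≤ 1 := by
          rw [div_mul_eq_mul_div, div_le_one (by positivity)]; linarith
  have hP₀err : ∀ y ∈ Icc (-γ) (-β), |P₀.eval y - q.eval y| ≤ ε' := by
    intro y hy
    obtain ⟨hy1, hy2⟩ := hy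
    have hyabs : |y| ≤ γ := by
      rw [abs_of_neg (by linarith : y < 0)]; linarith
    obtain ⟨hw1, hw2⟩ := hWy y ⟨hy1, hy2⟩
    have hwabs : |W.eval y| ≤ 1 := by
      rw [abs_le]; constructor <;> linarith
    have hqe : q.eval y = ∑ i ∈ Finset.range (D+1), q.coeff i * y ^ i := by
      rw [hD]; exact Polynomial.eval_eq_sum_range' (by omega) y
    have hdiff : P₀.eval y - q.eval y =
        ∑ i ∈ Finset.range (D+1),
          (A i * y ^ i * ((W.eval y) ^ (m i) - (-1:ℝ) ^ (m i))) := by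
      rw [hP₀eval, hqe, ← Finset.sum_sub_distrib]
      congr 1; funext i
      rw [hsign i]; ring
    have hsum : ∀ i ∈ Finset.range (D+1),
        |A i * y ^ i * ((W.eval y) ^ (m i) - (-1:ℝ) ^ (m i))| ≤
          A i * γ ^ i * ((M+1) * η) := by
      intro i _
      rw [abs_mul, abs_mul, abs_of_nonneg (hA0 i)]
      have h1 : |y ^ i| ≤ γ ^ i := by
        rw [abs_pow]; exact pow_le_pow_left₀ (abs_nonneg y) hyabs i
      have h2 : |(W.eval y) ^ (m i) - (-1:ℝ) ^ (m i)| ≤ (m i) * |W.eval y - (-1)| :=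
        abs_pow_sub_pow _ _ hwabs (by norm_num) (m i)
      have h3 : |W.eval y - (-1)| ≤ η := by
        rw [abs_le]; constructor <;> [linarith; linarith]
      have h4 : |(W.eval y) ^ (m i) - (-1:ℝ) ^ (m i)| ≤ (M+1) * η := by
        refine h2.trans ?_
        apply mul_le_mul _ h3 (abs_nonneg _) (by positivity)
        exact_mod_cast Nat.cast_le.mpr (hmM1 i)
      apply mul_le_mul (mul_le_mul_of_nonneg_left h1 (hA0 i)) h4 (abs_nonneg _)
      positivity
    rw [hdiff]
    have hstep1 := Finset.abs_sum_le_sum_abs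
      (fun i => A i * y ^ i * ((W.eval y) ^ (m i) - (-1:ℝ) ^ (m i)))
      (Finset.range (D+1))
    have hstep2 := Finset.sum_le_sum hsum
    have hstep3 : ∑ i ∈ Finset.range (D+1), A i * γ ^ i * ((M+1) * η)
        = B * ((M+1) * η) := by
      rw [hB, ← Finset.sum_mul]
    have hstep4 : B * ((M+1) * η) ≤ ε' := by
      have hη2 : η ≤ ε' / ((B+1)*(M+1)) := min_le_right _ _
      have hMpos : (0:ℝ) < M + 1 := by positivity
      have hb1 : B * ((M+1) * η) ≤ B * ((M+1) * (ε' / ((B+1)*(M+1)))) := by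
        apply mul_le_mul_of_nonneg_left _ hB0
        exact mul_le_mul_of_nonneg_left hη2 hMpos.le
      have heq : B * ((M+1) * (ε' / ((B+1)*(M+1)))) = ε' * (B / (B+1)) := by
        field_simp
      have hle : ε' * (B / (B+1)) ≤ ε' := by
        have hd : B / (B+1) ≤ 1 := by
          rw [div_le_one (by positivity)]; linarith
        nlinarith
      linarith
    exact hstep1.trans (hstep2.trans (le_of_eq_of_le hstep3 hstep4))
  set U : ℝ[X] := Polynomial.C (1+γ)⁻¹ * (Polynomial.X + Polynomial.C γ) with hU
  have hUNN : NN U := (NN.C (by positivity)).mul (NN.X.add (NN.C (by positivity)))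
  have hU1 : U.eval 1 = 1 := by
    rw [hU]
    simp only [eval_mul, eval_add, eval_C, eval_X]
    rw [inv_mul_cancel₀ (by positivity : (1+γ) ≠ 0)]
  set θ : ℝ := (γ - β)/(1+γ) with hθ
  have hθ0 : 0 ≤ θ := by
    apply div_nonneg (by linarith) (by positivity)
  have hθ1 : θ < 1 := by
    rw [hθ, div_lt_one (by positivity)]; linarith
  have hUy : ∀ y ∈ Icc (-γ) (-β), 0 ≤ U.eval y ∧ U.eval y ≤ θ := by
    intro y hy
    obtain ⟨hy1, hy2⟩ := hy
    have he : U.eval y = (1+γ)⁻¹ * (y + γ) := by rw [hU]; simp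
    constructor
    · rw [he]; apply mul_nonneg (by positivity); linarith
    · rw [he, hθ, div_eq_inv_mul]
      apply mul_le_mul_of_nonneg_left (by linarith) (by positivity)
  obtain ⟨M₂, hM₂⟩ := exists_pow_lt_of_lt_one hε'0 hθ1
  set P : ℝ[X] := P₀ + Polynomial.C (1 - mP) * U ^ M₂ with hP
  refine ⟨P, ?_, ?_, ?_⟩
  · exact hP₀NN.add ((NN.C (by linarith)).mul (hUNN.pow M₂))
  · rw [hP]
    simp only [eval_add, eval_mul, eval_pow, eval_C]
    rw [hU1, ← hmP]
    ring
  · intro y hy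
    obtain ⟨hu0, huθ⟩ := hUy y hy
    have he : P.eval y = P₀.eval y + (1 - mP) * (U.eval y) ^ M₂ := by
      rw [hP]; simp
    have h1 : |P.eval y - q.eval y| ≤
        |P₀.eval y - q.eval y| + |(1 - mP) * (U.eval y) ^ M₂| := by
      rw [he]
      calc |P₀.eval y + (1 - mP) * (U.eval y) ^ M₂ - q.eval y|
          = |(P₀.eval y - q.eval y) + (1 - mP) * (U.eval y) ^ M₂| := by ring_nf
        _ ≤ _ := abs_add_le _ _
    have h2 : |(1 - mP) * (U.eval y) ^ M₂| ≤ θ ^ M₂ := by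
      rw [abs_mul, abs_of_nonneg (by linarith : (0:ℝ) ≤ 1 - mP),
        abs_of_nonneg (pow_nonneg hu0 M₂)]
      have ha : (U.eval y) ^ M₂ ≤ θ ^ M₂ := pow_le_pow_left₀ hu0 huθ M₂
      nlinarith [pow_nonneg hu0 M₂]
    have := hP₀err y hy
    have hεsum : ε' + ε' < ε := by rw [hε']; linarith
    calc |P.eval y - q.eval y| ≤ ε' + θ ^ M₂ := by linarith
      _ < ε' + ε' := by linarith
      _ < ε := hεsum

/-- Stone-Weierstrass: approximation by polynomials in `x ^ k`. -/
lemma sw (a b : ℝ) (k : ℕ) (hkodd : Odd k)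
    (f : ℝ → ℝ) (hf : ContinuousOn f (Icc a b)) (ε : ℝ) (hε : 0 < ε) :
    ∃ q : ℝ[X], ∀ x ∈ Icc a b, |q.eval (x ^ k) - f x| < ε := by
  haveI : CompactSpace (Icc a b) := isCompact_iff_compactSpace.mp isCompact_Icc
  set φ : C(Icc a b, ℝ) :=
    ⟨fun x => (x : ℝ) ^ k, (continuous_subtype_val.pow k)⟩ with hφ
  set A : Subalgebra ℝ C(Icc a b, ℝ) := Algebra.adjoin ℝ {φ} with hA
  have hsep : A.SeparatesPoints := by
    intro x y hxy
    refine ⟨φ, ⟨φ, ?_, rfl⟩, ?_⟩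
    · exact Algebra.subset_adjoin (Set.mem_singleton _)
    · have hne : (x : ℝ) ≠ (y : ℝ) := fun h => hxy (Subtype.coe_injective h)
      exact fun h => hne ((Odd.strictMono_pow hkodd).injective h)
  obtain ⟨g, hg⟩ := ContinuousMap.exists_mem_subalgebra_near_continuous_of_separatesPoints
    A hsep (fun x => f x) (hf.restrict) ε hε
  obtain ⟨g, hgA⟩ := g
  rw [hA, Algebra.adjoin_singleton_eq_range_aeval] at hgA
  obtain ⟨q, hq⟩ := hgA
  refine ⟨q, fun x hx => ?_⟩
  have h1 := hg ⟨x, hx⟩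
  have hq' : (aeval φ) q = g := hq
  have h2 : g ⟨x, hx⟩ = q.eval (x ^ k) := by
    rw [← hq']
    have h3 := Polynomial.aeval_algHom_apply
      (ContinuousMap.evalAlgHom ℝ ℝ (⟨x, hx⟩ : Icc a b)) φ q
    simp only [ContinuousMap.evalAlgHom_apply] at h3
    rw [← h3]
    have h5 : φ ⟨x, hx⟩ = x ^ k := rfl
    rw [h5]
    simp [Polynomial.aeval_def, Polynomial.eval₂_eq_eval_map]
  rw [← h2]
  simpa using h1

/-- A nonneg-coefficient polynomial with coefficient sum 1, evaluated at `x ^ k`,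
is in the convex hull of the power functions. -/
lemma mem_hull (k : ℕ) (P : ℝ[X]) (hNN : NN P) (h1 : P.eval 1 = 1) :
    (fun x : ℝ => P.eval (x ^ k)) ∈
      convexHull ℝ (Set.range fun n : ℕ => fun x : ℝ => x ^ (k * n)) := by
  classical
  set T := Finset.range (P.natDegree + 1) with hT
  set w : ℕ → ℝ := fun i => P.coeff i with hw
  set z : ℕ → (ℝ → ℝ) := fun i => fun x : ℝ => x ^ (k * i) with hz
  have hsum : ∑ i ∈ T, w i = 1 := by
    have he := Polynomial.eval_eq_sum_range (p := P) (1:ℝ)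
    simp only [one_pow, mul_one] at he
    rw [hT, hw, ← he, h1]
  have hmem := Finset.centerMass_mem_convexHull T (fun i _ => hNN i)
    (by rw [hsum]; norm_num)
    (fun i _ => Set.mem_range_self (f := fun n : ℕ => fun x : ℝ => x ^ (k * n)) i)
  have hcm : T.centerMass w z = fun x : ℝ => P.eval (x ^ k) := by
    rw [Finset.centerMass, hsum, inv_one, one_smul]
    funext x
    rw [Finset.sum_apply]
    have he := Polynomial.eval_eq_sum_range (p := P) (x ^ k)
    rw [he, hT]
    congr 1; funext i
    have : x ^ (k * i) = (x ^ k) ^ i := pow_mul x k i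
    simp [hw, hz, this]
  rw [← hcm]
  exact hmem

end CPDense

open CPDense Set Polynomial in
theorem convexHull_powers_of_k_dense_iff_odd (a b : ℝ) (hab : a < b) (hb : b < -1)
    (k : ℕ) (hk : 0 < k) :
    (∀ f : ℝ → ℝ, ContinuousOn f (Set.Icc a b) → ∀ ε : ℝ, 0 < ε →
      ∃ g ∈ convexHull ℝ (Set.range fun n : ℕ => fun x : ℝ => x ^ (k * n)),
        ∀ x ∈ Set.Icc a b, |g x - f x| < ε)
    ↔ Odd k := by
  constructor
  · -- density implies odd
    intro hdense
    rcases Nat.even_or_odd k with hke | hko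
    · exfalso
      obtain ⟨g, hg, hgb⟩ := hdense (fun _ => 0) continuousOn_const 1 one_pos
      have hbmem : b ∈ Icc a b := ⟨hab.le, le_refl b⟩
      have habs : |g b - 0| < 1 := hgb b hbmem
      have hone : 1 ≤ g b := by
        have hsub : (Set.range fun n : ℕ => fun x : ℝ => x ^ (k * n)) ⊆
            {h : ℝ → ℝ | 1 ≤ h b} := by
          rintro _ ⟨n, rfl⟩
          show 1 ≤ b ^ (k*n)
          have heven : Even (k*n) := hke.mul_right n
          have h1b : 1 ≤ |b| := by rw [abs_of_neg (by linarith : b < 0)]; linarith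
          calc (1:ℝ) = 1 ^ (k*n) := (one_pow _).symm
            _ ≤ |b| ^ (k*n) := pow_le_pow_left₀ one_pos.le h1b _
            _ = b ^ (k*n) := heven.pow_abs b
        have hconv : Convex ℝ {h : ℝ → ℝ | 1 ≤ h b} := by
          intro h₁ h1m h₂ h2m s t hs ht hst
          have h1m' : 1 ≤ h₁ b := h1m
          have h2m' : 1 ≤ h₂ b := h2m
          show 1 ≤ (s • h₁ + t • h₂) b
          have happ : (s • h₁ + t • h₂) b = s * h₁ b + t * h₂ b := rfl
          rw [happ]
          nlinarith [mul_le_mul_of_nonneg_left h1m' hs, mul_le_mul_of_nonneg_left h2m' ht]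
        exact convexHull_min hsub hconv hg
      rw [sub_zero] at habs
      have := abs_lt.mp habs
      linarith
    · exact hko
  · -- odd implies density
    intro hkodd f hf ε hε
    have hk0 : k ≠ 0 := hk.ne'
    set β : ℝ := (-b) ^ k with hβdef
    set γ : ℝ := (-a) ^ k with hγdef
    have hb1 : (1:ℝ) < -b := by linarith
    have ha1 : (1:ℝ) < -a := by linarith
    have hβ : 1 < β := one_lt_pow₀ hb1 hk0
    have hβγ : β ≤ γ := pow_le_pow_left₀ (by linarith) (by linarith) k
    -- x ∈ Icc a b → x^k ∈ Icc (-γ) (-β)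
    have hmap : ∀ x ∈ Icc a b, x ^ k ∈ Icc (-γ) (-β) := by
      intro x hx
      obtain ⟨hx1, hx2⟩ := hx
      have h1 : a ^ k ≤ x ^ k := (Odd.strictMono_pow hkodd).monotone hx1
      have h2 : x ^ k ≤ b ^ k := (Odd.strictMono_pow hkodd).monotone hx2
      have ha' : a ^ k = -γ := by
        rw [hγdef, ← Odd.neg_pow hkodd, neg_neg]
      have hb' : b ^ k = -β := by
        rw [hβdef, ← Odd.neg_pow hkodd, neg_neg]
      rw [ha'] at h1; rw [hb'] at h2
      exact ⟨h1, h2⟩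
    obtain ⟨q, hq⟩ := sw a b k hkodd f hf (ε/2) (by positivity)
    obtain ⟨P, hPNN, hP1, hPq⟩ := main_y γ β hβ hβγ q (ε/2) (by positivity)
    refine ⟨fun x : ℝ => P.eval (x ^ k), mem_hull k P hPNN hP1, ?_⟩
    intro x hx
    have h1 := hq x hx
    have h2 := hPq (x ^ k) (hmap x hx)
    calc |P.eval (x ^ k) - f x|
        = |(P.eval (x ^ k) - q.eval (x ^ k)) + (q.eval (x ^ k) - f x)| := by ring_nf
      _ ≤ |P.eval (x ^ k) - q.eval (x ^ k)| + |q.eval (x ^ k) - f x| := abs_add_le _ _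
      _ < ε/2 + ε/2 := add_lt_add h2 h1
      _ = ε := by ring
end
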